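/- In the A₂^(1) representation, with T = π s₂ s₁, the reflections r₀ = s₀ s₁ s₀ and r₁ = s₂ each commute with T: r₀ T = T r₀ and r₁ T = T r₁ as automorphisms of ℂ(α₀,α₁,α₂,f₀,f₁,f₂). -/

import Mathlib

set_option maxHeartbeats 2000000
set_option synthInstance.maxHeartbeats 1000000


/-- The field ℂ(α₀, α₁, α₂, f₀, f₁, f₂) of rational functions. -/
noncomputable abbrev K : Type := FractionRing (MvPolynomial (Fin 6) ℂ)

noncomputable def gen (i : Fin 6) : K :=
  algebraMap (MvPolynomial (Fin 6) ℂ) K (MvPolynomial.X i)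

/-- α₀, α₁, α₂. -/
noncomputable def a (i : Fin 3) : K := gen (Fin.castAdd 3 i)

/-- f₀, f₁, f₂. -/
noncomputable def f (i : Fin 3) : K := gen (Fin.natAdd 3 i)

lemma gen_ne (i : Fin 6) : gen i ≠ 0 := by
  simp only [gen, ne_eq, map_eq_zero_iff _ (IsFractionRing.injective (MvPolynomial (Fin 6) ℂ) K)]
  exact MvPolynomial.X_ne_zero i

lemma f_ne (i : Fin 3) : f i ≠ 0 := gen_ne _

lemma map_ne (e : K ≃ₐ[ℂ] K) {x : K} (h : x ≠ 0) : e x ≠ 0 := by simpa using h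

lemma alg_ext (e₁ e₂ : K ≃ₐ[ℂ] K) (h : ∀ i, e₁ (gen i) = e₂ (gen i)) : ∀ x, e₁ x = e₂ x := by
  suffices h' : (e₁ : K →+* K) = (e₂ : K →+* K) by
    intro x; exact RingHom.congr_fun h' x
  apply IsLocalization.ringHom_ext (nonZeroDivisors (MvPolynomial (Fin 6) ℂ))
  apply MvPolynomial.ringHom_ext
  · intro c
    simp only [RingHom.comp_apply, RingHom.coe_coe]
    rw [show (MvPolynomial.C c : MvPolynomial (Fin 6) ℂ) = algebraMap ℂ _ c from rfl,
      ← IsScalarTower.algebraMap_apply]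
    simp [AlgEquiv.commutes]
  · intro i
    simpa [gen] using h i

lemma ext6 (e₁ e₂ : K ≃ₐ[ℂ] K)
    (h0 : e₁ (a 0) = e₂ (a 0)) (h1 : e₁ (a 1) = e₂ (a 1)) (h2 : e₁ (a 2) = e₂ (a 2))
    (k0 : e₁ (f 0) = e₂ (f 0)) (k1 : e₁ (f 1) = e₂ (f 1)) (k2 : e₁ (f 2) = e₂ (f 2)) :
    ∀ x, e₁ x = e₂ x := by
  apply alg_ext
  intro i
  fin_cases i
  exacts [h0, h1, h2, k0, k1, k2]


/-- the reflections r₀ = s₀s₁s₀ and r₁ = s₂ commute with the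
shift operator T = π s₂ s₁. -/
theorem stmt11 (s₀ s₁ s₂ π : K ≃ₐ[ℂ] K)
    (h0a0 : s₀ (a 0) = -a 0) (h0a1 : s₀ (a 1) = a 1 + a 0) (h0a2 : s₀ (a 2) = a 2 + a 0)
    (h0f0 : s₀ (f 0) = f 0) (h0f1 : s₀ (f 1) = f 1 + a 0 / f 0)
    (h0f2 : s₀ (f 2) = f 2 - a 0 / f 0)
    (h1a1 : s₁ (a 1) = -a 1) (h1a2 : s₁ (a 2) = a 2 + a 1) (h1a0 : s₁ (a 0) = a 0 + a 1)
    (h1f1 : s₁ (f 1) = f 1) (h1f2 : s₁ (f 2) = f 2 + a 1 / f 1)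
    (h1f0 : s₁ (f 0) = f 0 - a 1 / f 1)
    (h2a2 : s₂ (a 2) = -a 2) (h2a0 : s₂ (a 0) = a 0 + a 2) (h2a1 : s₂ (a 1) = a 1 + a 2)
    (h2f2 : s₂ (f 2) = f 2) (h2f0 : s₂ (f 0) = f 0 + a 2 / f 2)
    (h2f1 : s₂ (f 1) = f 1 - a 2 / f 2)
    (hp0 : π (a 0) = a 1) (hp1 : π (a 1) = a 2) (hp2 : π (a 2) = a 0)
    (hq0 : π (f 0) = f 1) (hq1 : π (f 1) = f 2) (hq2 : π (f 2) = f 0) :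
    (∀ x : K, s₀ (s₁ (s₀ (π (s₂ (s₁ x))))) = π (s₂ (s₁ (s₀ (s₁ (s₀ x)))))) ∧
      (∀ x : K, s₂ (π (s₂ (s₁ x))) = π (s₂ (s₁ (s₂ x)))) := by
  have n0 := f_ne 0
  have n1 := f_ne 1
  -- nonzeroness of the compound denominators
  have d1 : f 1 + a 0 / f 0 ≠ 0 := by
    have := map_ne s₀ n1; rwa [h0f1] at this
  have d2 : f 0 - a 1 / f 1 ≠ 0 := by
    have := map_ne s₁ n0; rwa [h1f0] at this
  have r1 : f 1 + a 0 / f 0 = (f 0 * f 1 + a 0) / f 0 := by field_simp; try ring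
  have r2 : f 0 - a 1 / f 1 = (f 0 * f 1 - a 1) / f 1 := by field_simp; try ring
  have e1 : f 0 * f 1 + a 0 ≠ 0 := by
    rw [r1] at d1; intro h; exact d1 (by rw [h, zero_div])
  have e2 : f 0 * f 1 - a 1 ≠ 0 := by
    rw [r2] at d2; intro h; exact d2 (by rw [h, zero_div])
  have r3 : f 0 - (a 1 + a 0) / ((f 0 * f 1 + a 0) / f 0)
      = f 0 * (f 0 * f 1 - a 1) / (f 0 * f 1 + a 0) := by
    field_simp; ring
  have r4 : f 1 + (a 0 + a 1) / ((f 0 * f 1 - a 1) / f 1)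
      = f 1 * (f 0 * f 1 + a 0) / (f 0 * f 1 - a 1) := by
    rw [div_div_eq_mul_div, eq_div_iff e2, add_mul, div_mul_cancel₀ _ e2]; ring
  -- π-conjugation relations
  have comm0 : ∀ x : K, s₀ (π x) = π (s₂ x) := by
    have h := ext6 (π.trans s₀) (s₂.trans π) ?_ ?_ ?_ ?_ ?_ ?_
    · exact fun x => h x
    all_goals
      simp only [AlgEquiv.trans_apply, h0a0, h0a1, h0a2, h0f0, h0f1, h0f2, h2a0, h2a1, h2a2,
        h2f0, h2f1, h2f2, hp0, hp1, hp2, hq0, hq1, hq2, map_add, map_sub, map_neg, map_div₀]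
  have comm1 : ∀ x : K, s₁ (π x) = π (s₀ x) := by
    have h := ext6 (π.trans s₁) (s₀.trans π) ?_ ?_ ?_ ?_ ?_ ?_
    · exact fun x => h x
    all_goals
      simp only [AlgEquiv.trans_apply, h1a0, h1a1, h1a2, h1f0, h1f1, h1f2, h0a0, h0a1, h0a2,
        h0f0, h0f1, h0f2, hp0, hp1, hp2, hq0, hq1, hq2, map_add, map_sub, map_neg, map_div₀]
  have comm2 : ∀ x : K, s₂ (π x) = π (s₁ x) := by
    have h := ext6 (π.trans s₂) (s₁.trans π) ?_ ?_ ?_ ?_ ?_ ?_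
    · exact fun x => h x
    all_goals
      simp only [AlgEquiv.trans_apply, h2a0, h2a1, h2a2, h2f0, h2f1, h2f2, h1a0, h1a1, h1a2,
        h1f0, h1f1, h1f2, hp0, hp1, hp2, hq0, hq1, hq2, map_add, map_sub, map_neg, map_div₀]
  -- involutivity of s₀
  have inv0 : ∀ x : K, s₀ (s₀ x) = x := by
    have h := ext6 (s₀.trans s₀) AlgEquiv.refl ?_ ?_ ?_ ?_ ?_ ?_
    · exact fun x => h x
    all_goals
      simp only [AlgEquiv.trans_apply, AlgEquiv.coe_refl, id_eq, h0a0, h0a1, h0a2, h0f0,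
        h0f1, h0f2, map_add, map_sub, map_neg, map_div₀]
    all_goals try ring
  -- involutivity of s₂, by conjugation
  have inv2 : ∀ x : K, s₂ (s₂ x) = x := by
    intro x
    obtain ⟨y, rfl⟩ : ∃ y, π (π y) = x := ⟨π.symm (π.symm x), by simp⟩
    rw [comm2 (π y), comm1 y, comm2 (π (s₀ y)), comm1 (s₀ y), inv0 y]
  -- the braid relation s₀s₁s₀ = s₁s₀s₁
  have braid01 : ∀ x : K, s₀ (s₁ (s₀ x)) = s₁ (s₀ (s₁ x)) := by
    have h := ext6 ((s₀.trans s₁).trans s₀) ((s₁.trans s₀).trans s₁) ?_ ?_ ?_ ?_ ?_ ?_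
    · exact fun x => h x
    all_goals
      simp only [AlgEquiv.trans_apply, h0a0, h0a1, h0a2, h0f0, h0f1, h0f2, h1a0, h1a1, h1a2,
        h1f0, h1f1, h1f2, map_add, map_sub, map_neg, map_div₀]
    all_goals first
      | ring1
      | (simp only [r1, r2, r3, r4]; field_simp; ring1)
  -- the braid relation s₁s₂s₁ = s₂s₁s₂, by conjugation
  have braid12 : ∀ x : K, s₁ (s₂ (s₁ x)) = s₂ (s₁ (s₂ x)) := by
    intro x
    obtain ⟨y, rfl⟩ : ∃ y, π y = x := ⟨π.symm x, by simp⟩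
    rw [comm1 y, comm2 (s₀ y), comm1 (s₁ (s₀ y)), braid01 y,
      comm2 y, comm1 (s₁ y), comm2 (s₀ (s₁ y))]
  constructor
  · intro x
    rw [comm0 (s₂ (s₁ x)), inv2 (s₁ x), comm1 (s₁ x), comm0 (s₀ (s₁ x)),
      ← braid01 (s₀ x), inv0 x]
  · intro x
    rw [comm2 (s₂ (s₁ x)), braid12 x]
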